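/- Let ℓ : ℝⁿ → ℝ be convex and L-smooth (gradient is L-Lipschitz), let G be symmetric positive-definite with smallest eigenvalue λ_min, and let s ∈ (0, λ_min/L). Then the preconditioned gradient step u ↦ u - s G^{-1} ∇ℓ(u) is non-expansive with respect to the norm ‖·‖_G. -/

import Mathlib

open scoped RealInnerProductSpace
open Matrix

noncomputable def normG {n : ℕ} (G : Matrix (Fin n) (Fin n) ℝ) (u : Fin n → ℝ) : ℝ :=
  Real.sqrt (dotProduct u (G.mulVec u))

def toE {n : ℕ} (v : Fin n → ℝ) : EuclideanSpace ℝ (Fin n) := WithLp.toLp 2 v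

section Aux

variable {n : ℕ}

lemma aux_curve_hasDerivAt (ℓ : EuclideanSpace ℝ (Fin n) → ℝ)
    (g : EuclideanSpace ℝ (Fin n) → EuclideanSpace ℝ (Fin n))
    (hgrad : ∀ u, HasGradientAt ℓ (g u) u) (x v : EuclideanSpace ℝ (Fin n)) (t : ℝ) :
    HasDerivAt (fun t : ℝ => ℓ (x + t • v)) ⟪g (x + t • v), v⟫ t := by
  have hc : HasDerivAt (fun t : ℝ => x + t • v) v t := by
    simpa using ((hasDerivAt_id t).smul_const v).const_add x
  have hf := (hasGradientAt_iff_hasFDerivAt.1 (hgrad (x + t • v)))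
  have := hf.comp_hasDerivAt t hc
  simpa [InnerProductSpace.toDual_apply_apply, Function.comp_def] using this

lemma aux_convex_lower (ℓ : EuclideanSpace ℝ (Fin n) → ℝ)
    (g : EuclideanSpace ℝ (Fin n) → EuclideanSpace ℝ (Fin n))
    (hgrad : ∀ u, HasGradientAt ℓ (g u) u) (hconv : ConvexOn ℝ Set.univ ℓ)
    (x y : EuclideanSpace ℝ (Fin n)) :
    ℓ x + ⟪g x, y - x⟫ ≤ ℓ y := by
  set φ : ℝ → ℝ := fun t => ℓ (x + t • (y - x)) with hφ
  have hφconv : ConvexOn ℝ Set.univ φ := by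
    have := hconv.comp_affineMap (AffineMap.lineMap x y : ℝ →ᵃ[ℝ] EuclideanSpace ℝ (Fin n))
    have heq : (ℓ ∘ (AffineMap.lineMap x y : ℝ →ᵃ[ℝ] EuclideanSpace ℝ (Fin n))) = φ := by
      funext t
      simp [hφ, AffineMap.lineMap_apply, add_comm]
    rw [heq] at this
    simpa using this
  have hd : HasDerivAt φ ⟪g x, y - x⟫ 0 := by
    simpa using aux_curve_hasDerivAt ℓ g hgrad x (y - x) 0
  have := hφconv.le_slope_of_hasDerivAt (Set.mem_univ (0:ℝ)) (Set.mem_univ (1:ℝ))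
    zero_lt_one hd
  have hslope : slope φ 0 1 = ℓ y - ℓ x := by
    simp [slope_def_field, hφ]
  rw [hslope] at this
  linarith

lemma aux_descent (ℓ : EuclideanSpace ℝ (Fin n) → ℝ)
    (g : EuclideanSpace ℝ (Fin n) → EuclideanSpace ℝ (Fin n)) (L : ℝ)
    (hgrad : ∀ u, HasGradientAt ℓ (g u) u)
    (hLip : ∀ u₁ u₂, ‖g u₁ - g u₂‖ ≤ L * ‖u₁ - u₂‖)
    (x y : EuclideanSpace ℝ (Fin n)) :
    ℓ y ≤ ℓ x + ⟪g x, y - x⟫ + L / 2 * ‖y - x‖ ^ 2 := by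
  set v := y - x with hv
  set ψ : ℝ → ℝ := fun t => ℓ (x + t • v) - t * ⟪g x, v⟫ - L / 2 * ‖v‖ ^ 2 * t ^ 2 with hψ
  have hder : ∀ t : ℝ, HasDerivAt ψ
      (⟪g (x + t • v), v⟫ - ⟪g x, v⟫ - L * ‖v‖ ^ 2 * t) t := by
    intro t
    have h1 := aux_curve_hasDerivAt ℓ g hgrad x v t
    have h2 : HasDerivAt (fun t : ℝ => t * ⟪g x, v⟫) ⟪g x, v⟫ t := by
      simpa using (hasDerivAt_id t).mul_const ⟪g x, v⟫
    have h3 : HasDerivAt (fun t : ℝ => L / 2 * ‖v‖ ^ 2 * t ^ 2)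
        (L / 2 * ‖v‖ ^ 2 * (2 * t)) t := by
      simpa using (hasDerivAt_pow 2 t).const_mul (L / 2 * ‖v‖ ^ 2)
    have := (h1.sub h2).sub h3
    convert this using 1
    · rfl
    · rfl
    · rfl
    · ring
  have hcont : Continuous ψ := by
    have : Differentiable ℝ ψ := fun t => (hder t).differentiableAt
    exact this.continuous
  have hanti : AntitoneOn ψ (Set.Icc 0 1) := by
    apply antitoneOn_of_deriv_nonpos (convex_Icc 0 1) hcont.continuousOn
    · intro t _
      exact (hder t).differentiableAt.differentiableWithinAt
    · intro t ht
      rw [interior_Icc] at ht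
      rw [(hder t).deriv]
      have hinner : ⟪g (x + t • v) - g x, v⟫ ≤ L * t * ‖v‖ ^ 2 := by
        calc ⟪g (x + t • v) - g x, v⟫ ≤ ‖g (x + t • v) - g x‖ * ‖v‖ :=
              real_inner_le_norm _ _
          _ ≤ (L * ‖(x + t • v) - x‖) * ‖v‖ := by
              have := hLip (x + t • v) x
              exact mul_le_mul_of_nonneg_right (by simpa using this) (norm_nonneg v)
          _ = L * t * ‖v‖ ^ 2 := by
              simp [norm_smul, abs_of_pos ht.1]
              ring
      have : ⟪g (x + t • v), v⟫ - ⟪g x, v⟫ = ⟪g (x + t • v) - g x, v⟫ := by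
        rw [inner_sub_left]
      linarith
  have h01 := hanti (Set.left_mem_Icc.2 zero_le_one) (Set.right_mem_Icc.2 zero_le_one)
    zero_le_one
  have hψ0 : ψ 0 = ℓ x := by simp [hψ]
  have hψ1 : ψ 1 = ℓ y - ⟪g x, v⟫ - L / 2 * ‖v‖ ^ 2 := by
    simp [hψ, hv]
  rw [hψ0, hψ1] at h01
  linarith

lemma aux_key_ineq (ℓ : EuclideanSpace ℝ (Fin n) → ℝ)
    (g : EuclideanSpace ℝ (Fin n) → EuclideanSpace ℝ (Fin n)) (L : ℝ) (hL : 0 < L)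
    (hgrad : ∀ u, HasGradientAt ℓ (g u) u) (hconv : ConvexOn ℝ Set.univ ℓ)
    (hLip : ∀ u₁ u₂, ‖g u₁ - g u₂‖ ≤ L * ‖u₁ - u₂‖)
    (x y : EuclideanSpace ℝ (Fin n)) :
    ℓ x + ⟪g x, y - x⟫ + ‖g y - g x‖ ^ 2 / (2 * L) ≤ ℓ y := by
  have hL' : L ≠ 0 := ne_of_gt hL
  set e := g y - g x with he
  set z := y - (1 / L) • e with hz
  have hA := aux_convex_lower ℓ g hgrad hconv x z
  have hB := aux_descent ℓ g L hgrad hLip y z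
  have hzy : z - y = -((1 / L) • e) := by rw [hz]; abel
  have h1 : ⟪g y, z - y⟫ = -(1 / L * ⟪g y, e⟫) := by
    rw [hzy, inner_neg_right, real_inner_smul_right]
  have h2 : ‖z - y‖ ^ 2 = (1 / L) ^ 2 * ‖e‖ ^ 2 := by
    rw [hzy, norm_neg, norm_smul]
    simp [abs_of_pos (one_div_pos.2 hL), mul_pow]
  have h3 : ⟪g x, z - x⟫ = ⟪g x, y - x⟫ - 1 / L * ⟪g x, e⟫ := by
    have : z - x = (y - x) + -((1/L) • e) := by rw [hz]; abel
    rw [this, inner_add_right, inner_neg_right, real_inner_smul_right]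
    ring
  have h4 : ⟪g y, e⟫ - ⟪g x, e⟫ = ‖e‖ ^ 2 := by
    rw [← inner_sub_left, ← he, real_inner_self_eq_norm_sq]
  have chain : ℓ x + ⟪g x, z - x⟫ ≤ ℓ y + ⟪g y, z - y⟫ + L / 2 * ‖z - y‖ ^ 2 := le_trans hA hB
  rw [h1, h2, h3] at chain
  have e1 : L / 2 * ((1 / L) ^ 2 * ‖e‖ ^ 2) = ‖e‖ ^ 2 / (2 * L) := by
    field_simp
  have e2 : 1 / L * ⟪g y, e⟫ - 1 / L * ⟪g x, e⟫ = ‖e‖ ^ 2 / L := by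
    rw [← mul_sub, h4]; field_simp
  have e3 : ‖e‖ ^ 2 / L - ‖e‖ ^ 2 / (2 * L) = ‖e‖ ^ 2 / (2 * L) := by
    field_simp; ring
  linarith

lemma aux_cocoercive (ℓ : EuclideanSpace ℝ (Fin n) → ℝ)
    (g : EuclideanSpace ℝ (Fin n) → EuclideanSpace ℝ (Fin n)) (L : ℝ) (hL : 0 < L)
    (hgrad : ∀ u, HasGradientAt ℓ (g u) u) (hconv : ConvexOn ℝ Set.univ ℓ)
    (hLip : ∀ u₁ u₂, ‖g u₁ - g u₂‖ ≤ L * ‖u₁ - u₂‖)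
    (u₁ u₂ : EuclideanSpace ℝ (Fin n)) :
    ‖g u₁ - g u₂‖ ^ 2 / L ≤ ⟪g u₁ - g u₂, u₁ - u₂⟫ := by
  have k1 := aux_key_ineq ℓ g L hL hgrad hconv hLip u₂ u₁
  have k2 := aux_key_ineq ℓ g L hL hgrad hconv hLip u₁ u₂
  have hnorm : ‖g u₂ - g u₁‖ = ‖g u₁ - g u₂‖ := norm_sub_rev _ _
  rw [hnorm] at k2
  have h5 : ⟪g u₁, u₂ - u₁⟫ = -⟪g u₁, u₁ - u₂⟫ := by
    rw [show u₂ - u₁ = -(u₁ - u₂) by abel, inner_neg_right]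
  have h6 : ⟪g u₁ - g u₂, u₁ - u₂⟫ = ⟪g u₁, u₁ - u₂⟫ - ⟪g u₂, u₁ - u₂⟫ := inner_sub_left _ _ _
  have e3 : ‖g u₁ - g u₂‖ ^ 2 / (2 * L) + ‖g u₁ - g u₂‖ ^ 2 / (2 * L)
      = ‖g u₁ - g u₂‖ ^ 2 / L := by
    field_simp; ring
  rw [h5] at k2
  linarith

lemma aux_inner_eq_dot (v w : EuclideanSpace ℝ (Fin n)) :
    ⟪v, w⟫ = dotProduct (v : Fin n → ℝ) (w : Fin n → ℝ) := by
  simp [PiLp.inner_apply, RCLike.inner_apply, dotProduct, mul_comm]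

lemma aux_lam_pos (hn : 0 < n) (G : Matrix (Fin n) (Fin n) ℝ) (hG : G.PosDef) :
    0 < ⨅ i, hG.1.eigenvalues i := by
  haveI : Nonempty (Fin n) := ⟨⟨0, hn⟩⟩
  obtain ⟨i0, hi0⟩ := Finite.exists_min hG.1.eigenvalues
  have : (⨅ i, hG.1.eigenvalues i) = hG.1.eigenvalues i0 :=
    le_antisymm (ciInf_le (Finite.bddBelow_range _) i0) (le_ciInf hi0)
  rw [this]; exact hG.eigenvalues_pos i0

lemma aux_quad_inv_le (hn : 0 < n) (G : Matrix (Fin n) (Fin n) ℝ) (hG : G.PosDef)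
    (x : Fin n → ℝ) :
    dotProduct x ((G⁻¹).mulVec x) ≤
      (⨅ i, hG.1.eigenvalues i)⁻¹ * dotProduct x x := by
  haveI : Nonempty (Fin n) := ⟨⟨0, hn⟩⟩
  set μ := hG.1.eigenvalues with hμ
  have hμpos : ∀ i, 0 < μ i := fun i => hG.eigenvalues_pos i
  set lm := ⨅ i, μ i with hlm
  have hlm_le : ∀ i, lm ≤ μ i := fun i => ciInf_le (Finite.bddBelow_range μ) i
  have hlm_pos : 0 < lm := aux_lam_pos hn G hG
  have hdet : IsUnit G.det := isUnit_iff_ne_zero.mpr (ne_of_gt hG.det_pos)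
  have hGsymm : Gᵀ = G := by
    ext i j
    have := congrFun (congrFun hG.1 i) j
    simpa using this
  have hGinvsymm : (G⁻¹)ᵀ = G⁻¹ := by
    rw [Matrix.transpose_nonsing_inv, hGsymm]
  set b := hG.1.eigenvectorBasis with hb
  have hGinvb : ∀ j, (G⁻¹).mulVec (b j) = (μ j)⁻¹ • (b j : Fin n → ℝ) := by
    intro j
    have h1 : G.mulVec (b j) = μ j • (b j : Fin n → ℝ) := hG.1.mulVec_eigenvectorBasis j
    have h2 : (G⁻¹ * G).mulVec (b j) = μ j • ((G⁻¹).mulVec (b j)) := by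
      rw [← Matrix.mulVec_mulVec, h1, Matrix.mulVec_smul]
    rw [Matrix.nonsing_inv_mul G hdet, Matrix.one_mulVec] at h2
    conv_rhs => rw [h2]
    rw [smul_smul, inv_mul_cancel₀ (ne_of_gt (hμpos j)), one_smul]
  set X : EuclideanSpace ℝ (Fin n) := WithLp.toLp 2 x with hX
  set Y : EuclideanSpace ℝ (Fin n) := WithLp.toLp 2 ((G⁻¹).mulVec x) with hY
  have hcoord : ∀ j, ⟪b j, Y⟫ = (μ j)⁻¹ * ⟪b j, X⟫ := by
    intro j
    rw [aux_inner_eq_dot, aux_inner_eq_dot]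
    have : dotProduct (b j : Fin n → ℝ) ((G⁻¹).mulVec x)
        = dotProduct ((G⁻¹).mulVec (b j)) x := by
      rw [dotProduct_mulVec, ← Matrix.mulVec_transpose, hGinvsymm]
    rw [this, hGinvb j, smul_dotProduct]
    simp [smul_eq_mul, hX]
  have hsumY : ⟪X, Y⟫ = ∑ j, ⟪X, b j⟫ * ⟪b j, Y⟫ := (b.sum_inner_mul_inner X Y).symm
  have hsumX : ⟪X, X⟫ = ∑ j, ⟪X, b j⟫ * ⟪b j, X⟫ := (b.sum_inner_mul_inner X X).symm
  have hbound : ⟪X, Y⟫ ≤ lm⁻¹ * ⟪X, X⟫ := by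
    rw [hsumY, hsumX, Finset.mul_sum]
    apply Finset.sum_le_sum
    intro j _
    rw [hcoord j, real_inner_comm (b j) X]
    have hinv : (μ j)⁻¹ ≤ lm⁻¹ := inv_anti₀ hlm_pos (hlm_le j)
    nlinarith [mul_self_nonneg (inner ℝ X (b j) : ℝ)]
  rw [aux_inner_eq_dot, aux_inner_eq_dot] at hbound
  exact hbound

end Aux

theorem stmt14 {n : ℕ} (hn : 0 < n) (G : Matrix (Fin n) (Fin n) ℝ) (hG : G.PosDef)
    (ℓ : EuclideanSpace ℝ (Fin n) → ℝ) (g : EuclideanSpace ℝ (Fin n) → EuclideanSpace ℝ (Fin n))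
    (L : ℝ) (hL : 0 < L)
    (hgrad : ∀ u, HasGradientAt ℓ (g u) u)
    (hconv : ConvexOn ℝ Set.univ ℓ)
    (hLip : ∀ u₁ u₂, ‖g u₁ - g u₂‖ ≤ L * ‖u₁ - u₂‖)
    (s : ℝ) (hs : s ∈ Set.Ioo 0 ((⨅ i, hG.1.eigenvalues i) / L)) :
    ∀ u₁ u₂ : EuclideanSpace ℝ (Fin n),
      normG G ((u₁ - s • toE ((G⁻¹).mulVec (g u₁)))
             - (u₂ - s • toE ((G⁻¹).mulVec (g u₂))))
        ≤ normG G (u₁ - u₂) := by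
  obtain ⟨hs0, hs1⟩ := hs
  intro u₁ u₂
  have hlm_pos : 0 < ⨅ i, hG.1.eigenvalues i := aux_lam_pos hn G hG
  set lm := ⨅ i, hG.1.eigenvalues i with hlm
  have hdet : IsUnit G.det := isUnit_iff_ne_zero.mpr (ne_of_gt hG.det_pos)
  have hGsymm : Gᵀ = G := by
    ext i j
    have := congrFun (congrFun hG.1 i) j
    simpa using this
  set d : Fin n → ℝ := ((u₁ - u₂ : EuclideanSpace ℝ (Fin n)) : Fin n → ℝ) with hd
  set e : Fin n → ℝ := ((g u₁ - g u₂ : EuclideanSpace ℝ (Fin n)) : Fin n → ℝ) with he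
  set w : Fin n → ℝ := d - s • ((G⁻¹).mulVec e) with hw
  have hGe : G.mulVec ((G⁻¹).mulVec e) = e := by
    rw [Matrix.mulVec_mulVec, Matrix.mul_nonsing_inv G hdet, Matrix.one_mulVec]
  have harg : ((u₁ - s • toE ((G⁻¹).mulVec (g u₁)))
             - (u₂ - s • toE ((G⁻¹).mulVec (g u₂))) : EuclideanSpace ℝ (Fin n))
      = (w : Fin n → ℝ) := by
    have hsub : (G⁻¹).mulVec e
        = fun i => ((G⁻¹).mulVec (g u₁)) i - ((G⁻¹).mulVec (g u₂)) i := by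
      funext i
      have hept : ∀ j, e j = g u₁ j - g u₂ j := fun j => rfl
      simp only [Matrix.mulVec, dotProduct]
      rw [← Finset.sum_sub_distrib]
      apply Finset.sum_congr rfl
      intro j _
      rw [hept j]
      ring
    funext i
    show (u₁ i - s * ((G⁻¹).mulVec (g u₁)) i) - (u₂ i - s * ((G⁻¹).mulVec (g u₂)) i) = w i
    rw [hw]
    have hdpt : d i = u₁ i - u₂ i := rfl
    show _ = d i - s * ((G⁻¹).mulVec e) i
    rw [hsub, hdpt]
    ring
  change normG G (WithLp.ofLp ((u₁ - s • toE ((G⁻¹).mulVec (g u₁))) - (u₂ - s • toE ((G⁻¹).mulVec (g u₂))))) ≤ normG G d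
  rw [harg]
  -- expansion
  have hA : dotProduct ((G⁻¹).mulVec e) (G.mulVec d) = dotProduct e d := by
    rw [dotProduct_mulVec, ← Matrix.mulVec_transpose, hGsymm, hGe]
  have key : dotProduct w (G.mulVec w)
      = dotProduct d (G.mulVec d) - 2 * s * dotProduct e d
        + s ^ 2 * dotProduct e ((G⁻¹).mulVec e) := by
    have h1 : G.mulVec w = G.mulVec d - s • e := by
      rw [hw, Matrix.mulVec_sub, Matrix.mulVec_smul, hGe]
    rw [hw, h1]
    simp only [sub_dotProduct, dotProduct_sub, smul_dotProduct,
      dotProduct_smul, smul_eq_mul]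
    rw [hA, dotProduct_comm ((G⁻¹).mulVec e) e, dotProduct_comm d e]
    ring
  -- inequalities
  have hQ := aux_quad_inv_le hn G hG e
  have hco := aux_cocoercive ℓ g L hL hgrad hconv hLip u₁ u₂
  have hNeq : ‖g u₁ - g u₂‖ ^ 2 = dotProduct e e := by
    rw [← real_inner_self_eq_norm_sq, aux_inner_eq_dot]
  have hipeq : ⟪g u₁ - g u₂, u₁ - u₂⟫ = dotProduct e d := aux_inner_eq_dot _ _
  rw [hNeq, hipeq] at hco
  set N := dotProduct e e with hN'
  set ip := dotProduct e d with hip'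
  have hN : 0 ≤ N := by
    rw [hN', ← aux_inner_eq_dot]
    exact real_inner_self_nonneg
  have hipnn : 0 ≤ ip := le_trans (div_nonneg hN hL.le) hco
  have h1 : s / lm ≤ 1 / L := by
    rw [div_le_div_iff₀ hlm_pos hL]
    rw [lt_div_iff₀ hL] at hs1
    linarith
  have h2 : s ^ 2 * dotProduct e ((G⁻¹).mulVec e) ≤ s ^ 2 * (lm⁻¹ * N) :=
    mul_le_mul_of_nonneg_left hQ (sq_nonneg s)
  have h3 : s ^ 2 * (lm⁻¹ * N) = s * ((s / lm) * N) := by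
    rw [div_eq_mul_inv]; ring
  have h4 : (s / lm) * N ≤ (1 / L) * N := mul_le_mul_of_nonneg_right h1 hN
  have h6 : s * ((s / lm) * N) ≤ s * ip := by
    apply mul_le_mul_of_nonneg_left _ hs0.le
    calc (s / lm) * N ≤ (1 / L) * N := h4
      _ = N / L := by ring
      _ ≤ ip := hco
  have hdots : dotProduct w (G.mulVec w) ≤ dotProduct d (G.mulVec d) := by
    rw [key]
    have : 0 ≤ s * ip := mul_nonneg hs0.le hipnn
    linarith [h2, h3 ▸ h2]
  unfold normG
  exact Real.sqrt_le_sqrt hdots
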